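/- For every real ρ > 0, every β ∈ [0, 1], and every integer K ≥ 1, there exists exactly one vector (v_0, v_1, …, v_K) ∈ ℝ^{K+1} with 1 = v_0 ≥ v_1 ≥ … ≥ v_K ≥ 0 satisfying, with the convention v_{K+1} = 0, v_k − v_{k+1} = ρ(β(v_{k−1}² − v_k²) + (1 − β)(v_{k−1} − v_k)) for every 1 ≤ k ≤ K. -/

import Mathlib

open Finset Real

noncomputable section

/-- Extend a vector `v = (v_0, …, v_K) ∈ ℝ^{K+1}` to `ℕ → ℝ` by zero,
implementing the convention `v_{K+1} = 0`. -/
def extProfile (K : ℕ) (v : Fin (K + 1) → ℝ) : ℕ → ℝ :=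
  fun k => if h : k < K + 1 then v ⟨k, h⟩ else 0

/-- `v` is an incentive profile for `(ρ, β, K)`: `1 = v_0 ≥ v_1 ≥ … ≥ v_K ≥ 0` and,
with the convention `v_{K+1} = 0`,
`v_k − v_{k+1} = ρ(β(v_{k−1}² − v_k²) + (1 − β)(v_{k−1} − v_k))` for `1 ≤ k ≤ K`. -/
def IsIncentiveProfile (ρ β : ℝ) (K : ℕ) (v : Fin (K + 1) → ℝ) : Prop :=
  extProfile K v 0 = 1 ∧
  (∀ k < K, extProfile K v (k + 1) ≤ extProfile K v k) ∧
  0 ≤ extProfile K v K ∧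
  ∀ k, 1 ≤ k → k ≤ K →
    extProfile K v k - extProfile K v (k + 1) =
      ρ * (β * ((extProfile K v (k - 1)) ^ 2 - (extProfile K v k) ^ 2) +
        (1 - β) * (extProfile K v (k - 1) - extProfile K v k))

/-- the flux function -/
def fQ (ρ β x : ℝ) : ℝ := ρ * (β * x ^ 2 + (1 - β) * x)

lemma fQ_one (ρ β : ℝ) : fQ ρ β 1 = ρ := by unfold fQ; ring

lemma fQ_zero (ρ β : ℝ) : fQ ρ β 0 = 0 := by unfold fQ; ring

lemma fQ_mono (ρ β : ℝ) (hρ : 0 ≤ ρ) (hβ0 : 0 ≤ β) (hβ1 : β ≤ 1)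
    {x y : ℝ} (hy : 0 ≤ y) (hxy : y ≤ x) : fQ ρ β y ≤ fQ ρ β x := by
  have h1 : 0 ≤ ρ * (β * ((x - y) * (x + y))) :=
    mul_nonneg hρ (mul_nonneg hβ0 (mul_nonneg (by linarith) (by linarith)))
  have h2 : 0 ≤ ρ * ((1 - β) * (x - y)) :=
    mul_nonneg hρ (mul_nonneg (by linarith) (by linarith))
  unfold fQ; nlinarith [h1, h2]

lemma fQ_nonneg (ρ β : ℝ) (hρ : 0 ≤ ρ) (hβ0 : 0 ≤ β) (hβ1 : β ≤ 1)
    {x : ℝ} (hx : 0 ≤ x) : 0 ≤ fQ ρ β x := by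
  have := fQ_mono ρ β hρ hβ0 hβ1 (le_refl (0:ℝ)) hx
  rwa [fQ_zero] at this

lemma extProfile_of_le (K : ℕ) (v : Fin (K + 1) → ℝ) {k : ℕ} (hk : k ≤ K) :
    extProfile K v k = v ⟨k, Nat.lt_succ_of_le hk⟩ := dif_pos _

lemma extProfile_top (K : ℕ) (v : Fin (K + 1) → ℝ) :
    extProfile K v (K + 1) = 0 := dif_neg (by omega)

section ProfileLemmas

variable {ρ β : ℝ} {K : ℕ} {v : Fin (K + 1) → ℝ}

lemma profile_step (hv : IsIncentiveProfile ρ β K v) :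
    ∀ k, 1 ≤ k → k ≤ K →
      extProfile K v k - extProfile K v (k + 1) =
        fQ ρ β (extProfile K v (k - 1)) - fQ ρ β (extProfile K v k) := by
  intro k h1 h2
  rw [hv.2.2.2 k h1 h2]; unfold fQ; ring

lemma profile_anti (hv : IsIncentiveProfile ρ β K v) :
    ∀ j k, j ≤ k → k ≤ K → extProfile K v k ≤ extProfile K v j := by
  intro j k hjk hk
  obtain ⟨d, rfl⟩ := Nat.exists_eq_add_of_le hjk
  clear hjk
  induction d with
  | zero => exact le_rfl
  | succ d ih =>
    have h1 : j + d < K := by omega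
    exact le_trans (hv.2.1 (j + d) h1) (ih (by omega))

lemma profile_nonneg (hv : IsIncentiveProfile ρ β K v) :
    ∀ k, k ≤ K → 0 ≤ extProfile K v k := by
  intro k hk
  exact le_trans hv.2.2.1 (profile_anti hv k K hk le_rfl)

lemma profile_closed (hv : IsIncentiveProfile ρ β K v) :
    ∀ k, 1 ≤ k → k ≤ K →
      extProfile K v k =
        fQ ρ β (extProfile K v (k - 1)) - fQ ρ β (extProfile K v K) := by
  have aux : ∀ d k, 1 ≤ k → k + d = K →
      extProfile K v k =
        fQ ρ β (extProfile K v (k - 1)) - fQ ρ β (extProfile K v K) := by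
    intro d
    induction d with
    | zero =>
      intro k h1 h2
      have hk : k = K := by omega
      subst hk
      have h3 := profile_step hv k (by omega) le_rfl
      rw [extProfile_top] at h3
      linarith
    | succ d ih =>
      intro k h1 h2
      have h3 := ih (k + 1) (by omega) (by omega)
      simp only [Nat.add_sub_cancel] at h3
      have h4 := profile_step hv k h1 (by omega)
      linarith
  intro k h1 h2
  exact aux (K - k) k h1 (by omega)

lemma profile_compare {v' : Fin (K + 1) → ℝ}
    (hρ : 0 < ρ) (hβ0 : 0 ≤ β) (hβ1 : β ≤ 1) (hK : 1 ≤ K)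
    (hv : IsIncentiveProfile ρ β K v) (hv' : IsIncentiveProfile ρ β K v')
    (hcc : fQ ρ β (extProfile K v K) ≤ fQ ρ β (extProfile K v' K)) :
    ∀ k, 1 ≤ k → k ≤ K →
      extProfile K v' k +
        (fQ ρ β (extProfile K v' K) - fQ ρ β (extProfile K v K)) ≤
      extProfile K v k := by
  intro k hk1
  induction k, hk1 using Nat.le_induction with
  | base =>
    intro _
    have h1 := profile_closed hv 1 le_rfl hK
    have h2 := profile_closed hv' 1 le_rfl hK
    simp only [Nat.sub_self] at h1 h2
    rw [hv.1] at h1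
    rw [hv'.1] at h2
    linarith
  | succ k hk ih =>
    intro hkK
    have ih' := ih (by omega)
    have h1 := profile_closed hv (k + 1) (by omega) hkK
    have h2 := profile_closed hv' (k + 1) (by omega) hkK
    simp only [Nat.add_sub_cancel] at h1 h2
    have h0 : 0 ≤ extProfile K v' k := profile_nonneg hv' k (by omega)
    have hle : extProfile K v' k ≤ extProfile K v k := by linarith
    have h3 := fQ_mono ρ β hρ.le hβ0 hβ1 h0 hle
    linarith

lemma profile_unique {v' : Fin (K + 1) → ℝ}
    (hρ : 0 < ρ) (hβ0 : 0 ≤ β) (hβ1 : β ≤ 1) (hK : 1 ≤ K)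
    (hv : IsIncentiveProfile ρ β K v) (hv' : IsIncentiveProfile ρ β K v') :
    v = v' := by
  set c := fQ ρ β (extProfile K v K) with hc
  set c' := fQ ρ β (extProfile K v' K) with hc'
  have key : ∀ (u u' : Fin (K + 1) → ℝ), IsIncentiveProfile ρ β K u →
      IsIncentiveProfile ρ β K u' →
      fQ ρ β (extProfile K u K) ≤ fQ ρ β (extProfile K u' K) →
      fQ ρ β (extProfile K u' K) ≤ fQ ρ β (extProfile K u K) := by
    intro u u' hu hu' h
    have h1 := profile_compare hρ hβ0 hβ1 hK hu hu' h K hK le_rfl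
    have h2 : extProfile K u' K ≤ extProfile K u K := by linarith
    exact fQ_mono ρ β hρ.le hβ0 hβ1 (profile_nonneg hu' K le_rfl) h2
  have hcc : c = c' := by
    rcases le_total c c' with h | h
    · exact le_antisymm h (key v v' hv hv' h)
    · exact le_antisymm (key v' v hv' hv h) h
  have heq : ∀ k, k ≤ K → extProfile K v k = extProfile K v' k := by
    intro k hkK
    rcases Nat.eq_zero_or_pos k with rfl | hk1
    · rw [hv.1, hv'.1]
    · have h1 := profile_compare hρ hβ0 hβ1 hK hv hv' (le_of_eq hcc) k hk1 hkK
      have h2 := profile_compare hρ hβ0 hβ1 hK hv' hv (le_of_eq hcc.symm) k hk1 hkK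
      linarith
  funext i
  have h1 : extProfile K v i.val = v i := by
    rw [extProfile_of_le K v (Nat.lt_succ_iff.mp i.isLt)]
  have h2 : extProfile K v' i.val = v' i := by
    rw [extProfile_of_le K v' (Nat.lt_succ_iff.mp i.isLt)]
  rw [← h1, ← h2, heq i.val (Nat.lt_succ_iff.mp i.isLt)]

end ProfileLemmas

/-- clipped iteration -/
def Wseq (ρ β c : ℝ) : ℕ → ℝ
  | 0 => 1
  | k + 1 => max 0 (fQ ρ β (Wseq ρ β c k) - c)

lemma Wseq_nonneg (ρ β c : ℝ) : ∀ k, 0 ≤ Wseq ρ β c k := by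
  intro k
  cases k with
  | zero => exact zero_le_one
  | succ k => exact le_max_left _ _

lemma Wseq_continuous (ρ β : ℝ) (k : ℕ) :
    Continuous (fun c => Wseq ρ β c k) := by
  induction k with
  | zero => exact continuous_const
  | succ k ih =>
    have hfq : Continuous (fQ ρ β) := by unfold fQ; fun_prop
    exact continuous_const.max ((hfq.comp ih).sub continuous_id)

/-- for every `ρ > 0`, `β ∈ [0,1]`, `K ≥ 1`, there is exactly one
incentive profile for `(ρ, β, K)`. -/
theorem incentive_profile_exists_unique (ρ : ℝ) (hρ : 0 < ρ)
    (β : ℝ) (hβ : β ∈ Set.Icc (0 : ℝ) 1) (K : ℕ) (hK : 1 ≤ K) :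
    ∃! v : Fin (K + 1) → ℝ, IsIncentiveProfile ρ β K v := by
  obtain ⟨hβ0, hβ1⟩ := hβ
  apply existsUnique_of_exists_of_unique
  · -- existence
    have hfq : Continuous (fQ ρ β) := by unfold fQ; fun_prop
    set g : ℝ → ℝ := fun c => fQ ρ β (Wseq ρ β c K) - c with hg
    have hgcont : Continuous g := (hfq.comp (Wseq_continuous ρ β K)).sub continuous_id
    have hg0 : 0 ≤ g 0 := by
      simp only [hg, sub_zero]
      exact fQ_nonneg ρ β hρ.le hβ0 hβ1 (Wseq_nonneg ρ β 0 K)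
    have hWrho : ∀ k, 1 ≤ k → Wseq ρ β ρ k = 0 := by
      intro k hk
      induction k with
      | zero => omega
      | succ k ih =>
        rcases Nat.eq_zero_or_pos k with rfl | hk'
        · show max 0 (fQ ρ β (Wseq ρ β ρ 0) - ρ) = 0
          rw [show Wseq ρ β ρ 0 = 1 from rfl, fQ_one]
          simp
        · show max 0 (fQ ρ β (Wseq ρ β ρ k) - ρ) = 0
          rw [ih hk', fQ_zero]
          rw [max_eq_left (by linarith)]
    have hgρ : g ρ ≤ 0 := by
      simp only [hg]
      rw [hWrho K hK, fQ_zero]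
      linarith
    obtain ⟨c, hcmem, hcfix⟩ :=
      intermediate_value_Icc' hρ.le hgcont.continuousOn ⟨hgρ, hg0⟩
    have hc0 : 0 ≤ c := hcmem.1
    set W : ℕ → ℝ := Wseq ρ β c with hW
    have hfix : fQ ρ β (W K) = c := by
      have : fQ ρ β (Wseq ρ β c K) - c = 0 := hcfix
      linarith
    have hWn : ∀ k, 0 ≤ W k := Wseq_nonneg ρ β c
    have hW0 : W 0 = 1 := rfl
    have hW1 : W 1 = max 0 (ρ - c) := by
      show max 0 (fQ ρ β (Wseq ρ β c 0) - c) = _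
      rw [show Wseq ρ β c 0 = 1 from rfl, fQ_one]
    have hW1le : W 1 ≤ 1 := by
      by_contra h
      push_neg at h
      have hmono : ∀ k, 1 ≤ k → W 1 ≤ W k := by
        intro k hk
        induction k with
        | zero => omega
        | succ k ih =>
          rcases Nat.eq_zero_or_pos k with rfl | hk'
          · exact le_rfl
          · have h1 : W 1 ≤ W k := ih hk'
            have h2 : fQ ρ β (W 0) ≤ fQ ρ β (W k) := by
              apply fQ_mono ρ β hρ.le hβ0 hβ1 (by rw [hW0]; exact zero_le_one)
              rw [hW0]; linarith
            calc W 1 = max 0 (fQ ρ β (W 0) - c) := rfl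
              _ ≤ max 0 (fQ ρ β (W k) - c) := max_le_max le_rfl (by linarith)
              _ = W (k + 1) := rfl
      have hWK : 1 < W K := lt_of_lt_of_le h (hmono K hK)
      have hρc : ρ ≤ c := by
        have h3 : fQ ρ β 1 ≤ fQ ρ β (W K) :=
          fQ_mono ρ β hρ.le hβ0 hβ1 zero_le_one hWK.le
        rwa [fQ_one, hfix] at h3
      have : W 1 ≤ 0 := by
        rw [hW1]
        exact max_le le_rfl (by linarith)
      linarith
    have hWanti : ∀ k, W (k + 1) ≤ W k := by
      intro k
      induction k with
      | zero => rw [hW0]; exact hW1le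
      | succ k ih =>
        calc W (k + 2) = max 0 (fQ ρ β (W (k + 1)) - c) := rfl
          _ ≤ max 0 (fQ ρ β (W k) - c) :=
              max_le_max le_rfl
                (sub_le_sub_right (fQ_mono ρ β hρ.le hβ0 hβ1 (hWn (k + 1)) ih) c)
          _ = W (k + 1) := rfl
    have hAnti : Antitone W := antitone_nat_of_succ_le hWanti
    have unclip : ∀ k, 1 ≤ k → k ≤ K → W k = fQ ρ β (W (k - 1)) - c := by
      intro k h1 hk
      have hfk : c ≤ fQ ρ β (W (k - 1)) := by
        rw [← hfix]
        exact fQ_mono ρ β hρ.le hβ0 hβ1 (hWn K) (hAnti (show k - 1 ≤ K by omega))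
      have hstep : W k = max 0 (fQ ρ β (W (k - 1)) - c) := by
        conv_lhs => rw [show k = (k - 1) + 1 by omega]
        rfl
      rw [hstep, max_eq_right (by linarith)]
    refine ⟨fun i => W i.val, ?_, ?_, ?_, ?_⟩
    · rw [extProfile_of_le K _ (Nat.zero_le K)]
      rfl
    · intro k hk
      rw [extProfile_of_le K _ (by omega : k + 1 ≤ K),
          extProfile_of_le K _ (by omega : k ≤ K)]
      exact hAnti (Nat.le_succ k)
    · rw [extProfile_of_le K _ le_rfl]
      exact hWn K
    · intro k h1 hk
      set v : Fin (K + 1) → ℝ := fun i => W i.val with hv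
      have he : ∀ j, j ≤ K → extProfile K v j = W j := by
        intro j hj
        rw [extProfile_of_le K v hj]
      have ekm : extProfile K v (k - 1) = W (k - 1) := he _ (by omega)
      have ek : extProfile K v k = W k := he k hk
      have ekW : W k = fQ ρ β (W (k - 1)) - c := unclip k h1 hk
      rcases eq_or_lt_of_le hk with rfl | hklt
      · rw [ekm, ek, extProfile_top]
        have h2 : W k = fQ ρ β (W (k - 1)) - fQ ρ β (W k) := by
          rw [hfix]; exact ekW
        unfold fQ at h2
        linear_combination h2
      · have ek1 : extProfile K v (k + 1) = fQ ρ β (W k) - c := by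
          rw [he (k + 1) (by omega)]
          have := unclip (k + 1) (by omega) (by omega)
          simpa using this
        rw [ekm, ek, ek1]
        unfold fQ at ekW ⊢
        linear_combination ekW
  · intro v v' hv hv'
    exact profile_unique hρ hβ0 hβ1 hK hv hv'
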